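/- For every positive integer d and every v ∈ {0,1}^d with e_{d−1} ≺_rlex v (so that P(v) is full-dimensional in ℝ^d), the inequality Σ_{j ∈ Sig(v)} x_j ≤ s(v) − 1 defines a facet of P(v). -/

import Mathlib

open Finset

/-- The set of 0/1-vectors in ℝ^d. -/
def ZeroOne (d : ℕ) : Set (Fin d → ℝ) := {x | ∀ i, x i = 0 ∨ x i = 1}

/-- `x` is reverse-lexicographically smaller than `y`:
there is an index `m` with `x m < y m` and `x i = y i` for all `i > m`
(equivalently, `x m < y m` for `m` the largest index where `x` and `y` differ). -/
def RlexLt {d : ℕ} (x y : Fin d → ℝ) : Prop :=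
  ∃ m : Fin d, x m < y m ∧ ∀ i : Fin d, m < i → x i = y i

/-- `X(v)`: the 0/1-points revlex-smaller than `v`. -/
def Xset {d : ℕ} (v : Fin d → ℝ) : Set (Fin d → ℝ) :=
  {x | x ∈ ZeroOne d ∧ RlexLt x v}

/-- The revlex-initial 0/1-polytope `P(v) = conv X(v)`. -/
noncomputable def Pset {d : ℕ} (v : Fin d → ℝ) : Set (Fin d → ℝ) :=
  convexHull ℝ (Xset v)

/-- `Sig(v)`: the support of `v` (the indices of its one-entries). -/
noncomputable def Sig {d : ℕ} (v : Fin d → ℝ) : Finset (Fin d) :=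
  @Finset.filter (Fin d) (fun i => v i = 1) (Classical.decPred _) Finset.univ

/-- `Sig_{>i}(v)`: the elements of `Sig(v)` above `i`. -/
noncomputable def SigGt {d : ℕ} (v : Fin d → ℝ) (i : Fin d) : Finset (Fin d) :=
  (Sig v).filter (fun j => i < j)

/-- The dimension of the affine hull of a set in ℝ^d. -/
noncomputable def adim {d : ℕ} (s : Set (Fin d → ℝ)) : ℕ :=
  Module.finrank ℝ (affineSpan ℝ s).direction

/-- A face of a polytope: a convex extreme subset. -/
def IsFaceOf {d : ℕ} (P F : Set (Fin d → ℝ)) : Prop :=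
  Convex ℝ F ∧ IsExtreme ℝ P F

/-- The number of indices satisfying a predicate. -/
noncomputable def cnt {d : ℕ} (p : Fin d → Prop) : ℕ :=
  (@Finset.filter (Fin d) p (Classical.decPred _) Finset.univ).card

lemma mem_Sig {d : ℕ} (v : Fin d → ℝ) (i : Fin d) : i ∈ Sig v ↔ v i = 1 := by
  unfold Sig; simp

lemma sum_single_Sig {d : ℕ} (v : Fin d → ℝ) (a : Fin d) (c : ℝ) :
    ∑ j ∈ Sig v, Pi.single a c j = if a ∈ Sig v then c else 0 := by
  simp [Pi.single_apply, Finset.sum_ite_eq' (Sig v) a (fun _ => c)]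

noncomputable def Lfun {d : ℕ} (S : Finset (Fin d)) : (Fin d → ℝ) →ₗ[ℝ] ℝ where
  toFun x := ∑ j ∈ S, x j
  map_add' x y := by simp [Finset.sum_add_distrib]
  map_smul' c x := by simp [Finset.mul_sum]

lemma valid_ineq {d : ℕ} (v : Fin d → ℝ) (hv : v ∈ ZeroOne d) :
    ∀ x ∈ Pset v, ∑ j ∈ Sig v, x j ≤ ((Sig v).card : ℝ) - 1 := by
  have hconv : Convex ℝ {x : Fin d → ℝ | ∑ j ∈ Sig v, x j ≤ ((Sig v).card : ℝ) - 1} :=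
    convex_halfSpace_le ⟨fun a b => Finset.sum_add_distrib, fun c a => by
      simp [Finset.mul_sum]⟩ _
  intro x hx
  refine convexHull_min ?_ hconv hx
  rintro y ⟨hy01, m, hm, -⟩
  have key : y m = 0 ∧ v m = 1 := by
    rcases hy01 m with h | h <;> rcases hv m with h' | h' <;>
      rw [h, h'] at hm <;> first | (exfalso; linarith) | exact ⟨h, h'⟩
  have hmS : m ∈ Sig v := (mem_Sig v m).2 key.2
  have hcard : 1 ≤ (Sig v).card := Finset.card_pos.2 ⟨m, hmS⟩
  calc ∑ j ∈ Sig v, y j = ∑ j ∈ (Sig v).erase m, y j + y m :=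
        (Finset.sum_erase_add _ _ hmS).symm
    _ = ∑ j ∈ (Sig v).erase m, y j := by rw [key.1, add_zero]
    _ ≤ ∑ _j ∈ (Sig v).erase m, (1:ℝ) :=
        Finset.sum_le_sum (fun i _ => by rcases hy01 i with h | h <;> simp [h])
    _ = (((Sig v).erase m).card : ℝ) := by simp
    _ = ((Sig v).card : ℝ) - 1 := by
        rw [Finset.card_erase_of_mem hmS, Nat.cast_sub hcard, Nat.cast_one]

noncomputable def Phi {d : ℕ} (v : Fin d → ℝ) (t m : Fin d) :
    (Fin d → ℝ) →ₗ[ℝ] (Fin d → ℝ) where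
  toFun x := fun l => if l = t then -∑ k ∈ Sig v, x k
    else if l = m then (∑ k ∈ Sig v, x k) - x m
    else if v l = 1 then -x l else x l
  map_add' x y := by
    funext l
    by_cases h1 : l = t <;> by_cases h2 : l = m <;> by_cases h3 : v l = 1 <;>
      simp [h1, h2, h3, Finset.sum_add_distrib] <;> (try split_ifs) <;> ring
  map_smul' c x := by
    funext l
    by_cases h1 : l = t <;> by_cases h2 : l = m <;> by_cases h3 : v l = 1 <;>
      simp [h1, h2, h3, Finset.mul_sum] <;> (try split_ifs) <;>
      (try rw [mul_sub, Finset.mul_sum]) <;> ring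

lemma Phi_apply {d : ℕ} (v : Fin d → ℝ) (t m : Fin d) (x : Fin d → ℝ) (l : Fin d) :
    Phi v t m x l = if l = t then -∑ k ∈ Sig v, x k
    else if l = m then (∑ k ∈ Sig v, x k) - x m
    else if v l = 1 then -x l else x l := rfl

noncomputable def gfam {d : ℕ} (v : Fin d → ℝ) (t m : Fin d) : Fin d → (Fin d → ℝ) :=
  fun k => if k = t then -(Pi.single m 1)
    else if v k = 1 then Pi.single t 1 - Pi.single k 1
    else Pi.single k 1

lemma gfam_sum {d : ℕ} (v : Fin d → ℝ) {t m : Fin d} (hvt : v t = 1) (hvm : v m = 1)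
    (k : Fin d) : ∑ j ∈ Sig v, gfam v t m k j = if k = t then (-1:ℝ) else 0 := by
  have htS : t ∈ Sig v := (mem_Sig v t).2 hvt
  have hmS : m ∈ Sig v := (mem_Sig v m).2 hvm
  unfold gfam
  by_cases hk : k = t
  · simp [hk, sum_single_Sig, hmS]
  · by_cases hk1 : v k = 1
    · have hkS : k ∈ Sig v := (mem_Sig v k).2 hk1
      simp [hk, hk1, Finset.sum_sub_distrib, sum_single_Sig, htS, hkS]
    · have hkS : k ∉ Sig v := fun h => hk1 ((mem_Sig v k).1 h)
      simp [hk, hk1, sum_single_Sig, hkS]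

lemma Phi_gfam {d : ℕ} (v : Fin d → ℝ) {t m : Fin d} (hvt : v t = 1) (hvm : v m = 1)
    (hmt : m ≠ t) (k : Fin d) : Phi v t m (gfam v t m k) = Pi.single k 1 := by
  funext l
  rw [Phi_apply, gfam_sum v hvt hvm k]
  unfold gfam
  by_cases h1 : l = t <;> by_cases h2 : l = m <;> by_cases h4 : k = t <;>
    by_cases h5 : v k = 1 <;> by_cases h6 : l = k <;>
    simp_all [Pi.single_apply]

lemma gfam_li {d : ℕ} (v : Fin d → ℝ) {t m : Fin d} (hvt : v t = 1) (hvm : v m = 1)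
    (hmt : m ≠ t) : LinearIndependent ℝ (gfam v t m) := by
  apply LinearIndependent.of_comp (Phi v t m)
  have : (⇑(Phi v t m)) ∘ (gfam v t m) = fun k : Fin d => (Pi.single k 1 : Fin d → ℝ) :=
    funext fun k => Phi_gfam v hvt hvm hmt k
  rw [this]
  have := (Pi.basisFun ℝ (Fin d)).linearIndependent
  convert this using 1
  funext k
  simp [Pi.basisFun_apply]

/-- for full-dimensional `P(v)`, the inequality
`Σ_{j ∈ Sig(v)} x_j ≤ s(v) − 1` defines a facet of `P(v)`. -/
theorem stmt4 (d : ℕ) (hd : 0 < d) (v : Fin d → ℝ) (hv : v ∈ ZeroOne d)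
    (hfull : RlexLt (Pi.single (⟨d - 1, by omega⟩ : Fin d) (1 : ℝ)) v) :
    (∀ x ∈ Pset v, ∑ j ∈ Sig v, x j ≤ ((Sig v).card : ℝ) - 1) ∧
    adim {x ∈ Pset v | ∑ j ∈ Sig v, x j = ((Sig v).card : ℝ) - 1} = adim (Pset v) - 1 := by
  classical
  refine ⟨valid_ineq v hv, ?_⟩
  set t : Fin d := ⟨d - 1, by omega⟩ with ht
  obtain ⟨m, hm1, hm2⟩ := hfull
  have hmne : m ≠ t := by
    intro h
    rw [h, Pi.single_eq_same] at hm1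
    rcases hv t with h' | h' <;> rw [h'] at hm1 <;> linarith
  have hvm : v m = 1 := by
    rcases hv m with h | h
    · exfalso
      rw [h] at hm1
      rcases eq_or_ne m t with h' | h'
      · rw [h', Pi.single_eq_same] at hm1; linarith
      · rw [Pi.single_eq_of_ne h'] at hm1; linarith
    · exact h
  have htval : (t : ℕ) = d - 1 := rfl
  have hmlt : m < t := by
    have h1 : (m : ℕ) < d := m.isLt
    have h2 : (m : ℕ) ≠ d - 1 := fun h => hmne (Fin.ext (by rw [h, htval]))
    exact Fin.lt_def.mpr (by omega)
  have hvt : v t = 1 := by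
    have := hm2 t hmlt
    rw [Pi.single_eq_same] at this
    exact this.symm
  have htS : t ∈ Sig v := (mem_Sig v t).2 hvt
  have hmS : m ∈ Sig v := (mem_Sig v m).2 hvm
  have htop : ∀ i : Fin d, ¬ t < i := by
    intro i hi
    have h1 := Fin.lt_def.mp hi
    have h2 := i.isLt
    omega
  -- the points
  set p : Fin d → (Fin d → ℝ) := fun j => Function.update v j 0 with hp
  set q : Fin d → (Fin d → ℝ) := fun i => Function.update (Function.update v t 0) i 1 with hq
  set r : Fin d → ℝ := Function.update (Function.update v t 0) m 0 with hr
  -- memberships in Xset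
  have hpX : ∀ j, v j = 1 → p j ∈ Xset v := by
    intro j hj
    refine ⟨fun i => ?_, j, ?_, fun i hij => ?_⟩
    · rcases eq_or_ne i j with rfl | h
      · left; simp [hp]
      · rw [hp]; simp only [Function.update_of_ne h]; exact hv i
    · simp [hp, hj]
    · simp [hp, Function.update_of_ne hij.ne']
  have hqX : ∀ i, v i = 0 → q i ∈ Xset v := by
    intro i hi
    have hit : i ≠ t := fun h => by rw [h, hvt] at hi; linarith
    refine ⟨fun l => ?_, t, ?_, fun l hl => absurd hl (htop l)⟩
    · rcases eq_or_ne l i with rfl | h1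
      · right; simp [hq]
      · rcases eq_or_ne l t with rfl | h2
        · left; simp [hq, Function.update_of_ne h1]
        · rw [hq]; simp only [Function.update_of_ne h1, Function.update_of_ne h2]; exact hv l
    · rw [hq]
      simp only [Function.update_of_ne (Ne.symm hit).symm]
      rw [Function.update_of_ne hit.symm, Function.update_self, hvt]
      norm_num
  have hrX : r ∈ Xset v := by
    refine ⟨fun l => ?_, t, ?_, fun l hl => absurd hl (htop l)⟩
    · rcases eq_or_ne l m with rfl | h1
      · left; simp [hr]
      · rcases eq_or_ne l t with rfl | h2
        · left; simp [hr, Function.update_of_ne h1]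
        · rw [hr]; simp only [Function.update_of_ne h1, Function.update_of_ne h2]; exact hv l
    · rw [hr, Function.update_of_ne hmne.symm, Function.update_self, hvt]
      norm_num
  -- sums
  have hones : ∀ T : Finset (Fin d), T ⊆ Sig v → ∑ k ∈ T, v k = (T.card : ℝ) := by
    intro T hT
    rw [Finset.sum_congr rfl (fun k hk => (mem_Sig v k).1 (hT hk))]
    simp
  have hcard1 : 1 ≤ (Sig v).card := Finset.card_pos.2 ⟨m, hmS⟩
  have hpsum : ∀ j, j ∈ Sig v → ∑ k ∈ Sig v, p j k = ((Sig v).card : ℝ) - 1 := by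
    intro j hj
    rw [hp]
    simp only
    rw [Finset.sum_update_of_mem hj, zero_add, hones _ Finset.sdiff_subset,
      Finset.card_sdiff_of_subset (Finset.singleton_subset_iff.2 hj), Finset.card_singleton,
      Nat.cast_sub hcard1, Nat.cast_one]
  have hqsum : ∀ i, v i = 0 → ∑ k ∈ Sig v, q i k = ((Sig v).card : ℝ) - 1 := by
    intro i hi
    have : ∀ k ∈ Sig v, q i k = Function.update v t 0 k := by
      intro k hk
      have : k ≠ i := fun h => by
        rw [h] at hk; rw [(mem_Sig v i).1 hk] at hi; linarith
      rw [hq]; simp only [Function.update_of_ne this]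
    rw [Finset.sum_congr rfl this, Finset.sum_update_of_mem htS, zero_add,
      hones _ Finset.sdiff_subset,
      Finset.card_sdiff_of_subset (Finset.singleton_subset_iff.2 htS), Finset.card_singleton,
      Nat.cast_sub hcard1, Nat.cast_one]
  -- the face F
  set F : Set (Fin d → ℝ) := {x ∈ Pset v | ∑ j ∈ Sig v, x j = ((Sig v).card : ℝ) - 1} with hF
  have hXP : Xset v ⊆ Pset v := subset_convexHull ℝ _
  have hpF : ∀ j, j ∈ Sig v → p j ∈ F := fun j hj =>
    ⟨hXP (hpX j ((mem_Sig v j).1 hj)), hpsum j hj⟩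
  have hqF : ∀ i, v i = 0 → q i ∈ F := fun i hi => ⟨hXP (hqX i hi), hqsum i hi⟩
  -- identities relating gfam and the points
  have hgp : ∀ k, k ≠ t → v k = 1 → gfam v t m k = p k - p t := by
    intro k hk hk1
    funext l
    rw [hp]
    unfold gfam
    rcases eq_or_ne l k with rfl | h1
    · simp [Function.update_apply, Pi.single_apply, hk, hk1]
    · rcases eq_or_ne l t with rfl | h2
      · simp [Function.update_apply, Pi.single_apply, h1, hvt, hk, hk1]
      · simp [Function.update_apply, Pi.single_apply, h1, h2, hk, hk1]
  have hgq : ∀ k, v k = 0 → gfam v t m k = q k - p t := by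
    intro k hk
    have hkt : k ≠ t := fun h => by rw [h, hvt] at hk; linarith
    have hk1 : v k ≠ 1 := by rw [hk]; norm_num
    funext l
    rw [hp, hq]
    unfold gfam
    rcases eq_or_ne l k with rfl | h1
    · simp [Function.update_apply, Pi.single_apply, hkt, hk]
    · rcases eq_or_ne l t with rfl | h2
      · simp [Function.update_apply, Pi.single_apply, h1, hkt, hk1]
      · simp [Function.update_apply, Pi.single_apply, h1, h2, hkt, hk1]
  have hgr : gfam v t m t = r - p t := by
    funext l
    rw [hp, hr]
    unfold gfam
    rcases eq_or_ne l m with rfl | h1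
    · simp [Function.update_apply, Pi.single_apply, hmne, hvm]
    · rcases eq_or_ne l t with rfl | h2
      · simp [Function.update_apply, Pi.single_apply, h1]
      · simp [Function.update_apply, Pi.single_apply, h1, h2]
  -- each gfam k lies in the direction of affineSpan F (for k ≠ t) resp. Pset v
  have hFsubP : F ⊆ Pset v := fun x hx => hx.1
  have hgDP : ∀ k, gfam v t m k ∈ (affineSpan ℝ (Pset v)).direction := by
    intro k
    rcases eq_or_ne k t with rfl | hk
    · rw [hgr]
      have h1 := subset_affineSpan ℝ (Pset v) (hXP hrX)
      have h2 := subset_affineSpan ℝ (Pset v) (hFsubP (hpF t htS))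
      simpa using AffineSubspace.vsub_mem_direction h1 h2
    · rcases hv k with hk0 | hk1
      · rw [hgq k hk0]
        have h1 := subset_affineSpan ℝ (Pset v) (hFsubP (hqF k hk0))
        have h2 := subset_affineSpan ℝ (Pset v) (hFsubP (hpF t htS))
        simpa using AffineSubspace.vsub_mem_direction h1 h2
      · rw [hgp k hk hk1]
        have h1 := subset_affineSpan ℝ (Pset v)
          (hFsubP (hpF k ((mem_Sig v k).2 hk1)))
        have h2 := subset_affineSpan ℝ (Pset v) (hFsubP (hpF t htS))
        simpa using AffineSubspace.vsub_mem_direction h1 h2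
  have hgDF : ∀ k, k ≠ t → gfam v t m k ∈ (affineSpan ℝ F).direction := by
    intro k hk
    rcases hv k with hk0 | hk1
    · rw [hgq k hk0]
      have h1 := subset_affineSpan ℝ F (hqF k hk0)
      have h2 := subset_affineSpan ℝ F (hpF t htS)
      simpa using AffineSubspace.vsub_mem_direction h1 h2
    · rw [hgp k hk hk1]
      have h1 := subset_affineSpan ℝ F (hpF k ((mem_Sig v k).2 hk1))
      have h2 := subset_affineSpan ℝ F (hpF t htS)
      simpa using AffineSubspace.vsub_mem_direction h1 h2
  have hli : LinearIndependent ℝ (gfam v t m) := gfam_li v hvt hvm hmne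
  -- dimension of P
  have hDP : Module.finrank ℝ (affineSpan ℝ (Pset v)).direction = d := by
    apply le_antisymm
    · calc Module.finrank ℝ (affineSpan ℝ (Pset v)).direction
          ≤ Module.finrank ℝ (Fin d → ℝ) := Submodule.finrank_le _
        _ = d := by simp [Module.finrank_fintype_fun_eq_card]
    · have hspan : Submodule.span ℝ (Set.range (gfam v t m)) ≤
          (affineSpan ℝ (Pset v)).direction := by
        rw [Submodule.span_le]
        rintro _ ⟨k, rfl⟩
        exact hgDP k
      calc d = Module.finrank ℝ (Submodule.span ℝ (Set.range (gfam v t m))) := by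
            rw [finrank_span_eq_card hli]; simp
        _ ≤ _ := Submodule.finrank_mono hspan
  -- dimension of F
  have hLker : Module.finrank ℝ (LinearMap.ker (Lfun (Sig v))) = d - 1 := by
    have hsurj : Function.Surjective (Lfun (Sig v)) := by
      intro c
      refine ⟨c • (Pi.single t 1 : Fin d → ℝ), ?_⟩
      show ∑ j ∈ Sig v, (c • (Pi.single t 1 : Fin d → ℝ)) j = c
      simp only [Pi.smul_apply, smul_eq_mul, ← Finset.mul_sum]
      rw [sum_single_Sig v t 1, if_pos htS, mul_one]
    have h1 := LinearMap.finrank_range_add_finrank_ker (Lfun (Sig v))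
    rw [LinearMap.range_eq_top.2 hsurj] at h1
    simp only [finrank_top, Module.finrank_self, Module.finrank_fintype_fun_eq_card,
      Fintype.card_fin] at h1
    omega
  have hDFle : Module.finrank ℝ (affineSpan ℝ F).direction ≤ d - 1 := by
    have hsub : (affineSpan ℝ F).direction ≤ LinearMap.ker (Lfun (Sig v)) := by
      rw [direction_affineSpan, vectorSpan_def, Submodule.span_le]
      rintro z ⟨x, hx, y, hy, rfl⟩
      simp only [SetLike.mem_coe, LinearMap.mem_ker, vsub_eq_sub, map_sub]
      have hx2 : ∑ j ∈ Sig v, x j = ((Sig v).card : ℝ) - 1 := hx.2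
      have hy2 : ∑ j ∈ Sig v, y j = ((Sig v).card : ℝ) - 1 := hy.2
      show (∑ j ∈ Sig v, x j) - (∑ j ∈ Sig v, y j) = 0
      rw [hx2, hy2]; ring
    calc Module.finrank ℝ (affineSpan ℝ F).direction
        ≤ Module.finrank ℝ (LinearMap.ker (Lfun (Sig v))) := Submodule.finrank_mono hsub
      _ = d - 1 := hLker
  have hDFge : d - 1 ≤ Module.finrank ℝ (affineSpan ℝ F).direction := by
    set g' : {k : Fin d // k ≠ t} → (Fin d → ℝ) := fun k => gfam v t m k.1 with hg'
    have hli' : LinearIndependent ℝ g' := hli.comp _ Subtype.val_injective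
    have hspan : Submodule.span ℝ (Set.range g') ≤ (affineSpan ℝ F).direction := by
      rw [Submodule.span_le]
      rintro _ ⟨k, rfl⟩
      exact hgDF k.1 k.2
    have hcard : Fintype.card {k : Fin d // k ≠ t} = d - 1 := by
      have h := Fintype.card_subtype_compl (fun k : Fin d => k = t)
      simp only [Fintype.card_subtype_eq, Fintype.card_fin] at h
      exact h
    calc d - 1 = Module.finrank ℝ (Submodule.span ℝ (Set.range g')) := by
          rw [finrank_span_eq_card hli', hcard]
      _ ≤ _ := Submodule.finrank_mono hspan
  show Module.finrank ℝ (affineSpan ℝ F).direction = Module.finrank ℝ (affineSpan ℝ (Pset v)).direction - 1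
  rw [hDP]
  exact le_antisymm hDFle hDFge
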